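/- If C ⊆ F_q^n is a Λ-multi-twisted code (T_Λ-invariant subspace), then its right κ-Galois dual C^{⊥_κ} is a σ^{e-κ}(Δ)-multi-twisted code, i.e., invariant under T_{σ^{e-κ}(Δ)} where Δ = (λ_1^{-1},...,λ_ℓ^{-1}) and σ^{e-κ}(Δ) = (λ_1^{-p^{e-κ}},...,λ_ℓ^{-p^{e-κ}}). -/
import Mathlib


/-- The multi-twist shift of `⊕_j F^{m_j}` with shift constants `Λ`. -/
def twistShift {F : Type} [Field F] {ℓ : ℕ} (m : Fin ℓ → ℕ) (Λ : Fin ℓ → F)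
    (a : ∀ j, Fin (m j) → F) : ∀ j, Fin (m j) → F :=
  fun j i =>
    if (i : ℕ) = 0 then Λ j * a j ⟨m j - 1, by have := i.isLt; omega⟩
    else a j ⟨(i : ℕ) - 1, by have := i.isLt; omega⟩

lemma twistShift_add_one {F : Type} [Field F] {ℓ : ℕ} {m : Fin ℓ → ℕ} (Λ : Fin ℓ → F)
    (x : ∀ j, Fin (m j) → F) (j : Fin ℓ) [NeZero (m j)] (i : Fin (m j)) :
    twistShift m Λ x j (i + 1) =
      if (i : ℕ) = m j - 1 then Λ j * x j i else x j i := by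
  have hn : 0 < m j := Nat.pos_of_ne_zero (NeZero.ne _)
  have hval : ((i + 1 : Fin (m j)) : ℕ) = (i.val + 1) % m j := by
    rw [Fin.val_add, Fin.val_one']
    conv_rhs => rw [Nat.add_mod]
    rw [Nat.mod_eq_of_lt i.isLt]
  by_cases h : (i : ℕ) = m j - 1
  · have h0 : ((i + 1 : Fin (m j)) : ℕ) = 0 := by
      rw [hval, h, Nat.sub_add_cancel hn, Nat.mod_self]
    rw [twistShift, if_pos h0, if_pos h]
    exact congrArg (fun t => Λ j * t) (congrArg (x j) (Fin.val_injective h.symm))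
  · have h2 : i.val + 1 < m j := by have := i.isLt; omega
    have h0 : ((i + 1 : Fin (m j)) : ℕ) = i.val + 1 := by
      rw [hval, Nat.mod_eq_of_lt h2]
    rw [twistShift, if_neg (by rw [h0]; omega), if_neg h]
    exact congrArg (x j) (Fin.val_injective (show ((i + 1 : Fin (m j)) : ℕ) - 1 = (i : ℕ) by omega))

lemma twistShift_injective {F : Type} [Field F] {ℓ : ℕ} (m : Fin ℓ → ℕ) (hm : ∀ j, 0 < m j)
    (Λ : Fin ℓ → F) (hΛ : ∀ j, Λ j ≠ 0) :
    Function.Injective (twistShift m Λ) := by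
  intro x y h
  funext j i
  haveI : NeZero (m j) := ⟨(hm j).ne'⟩
  have h1 := congrFun (congrFun h j) (i + 1)
  rw [twistShift_add_one, twistShift_add_one] at h1
  by_cases hcase : (i : ℕ) = m j - 1
  · rw [if_pos hcase, if_pos hcase] at h1
    exact mul_left_cancel₀ (hΛ j) h1
  · rwa [if_neg hcase, if_neg hcase] at h1

lemma sum_cycle {M : Type} [AddCommMonoid M] {n : ℕ} [NeZero n] (f : Fin n → M) :
    ∑ i, f i = ∑ i, f (i + 1) :=
  (Equiv.sum_comp (Equiv.addRight (1 : Fin n)) f).symm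

/-- If `C` is a `Λ`-multi-twisted code, then its right κ-Galois dual `C^{⊥_κ}` is a
`σ^{e-κ}(Δ)`-multi-twisted code, where `Δ = (λ_1⁻¹, ..., λ_ℓ⁻¹)`. -/
theorem rightGaloisDual_twistShift_invariant
    (p e κ : ℕ) (hp : p.Prime) (hκ : κ < e)
    (F : Type) [Field F] [Fintype F] (hcard : Fintype.card F = p ^ e)
    (ℓ : ℕ) (m : Fin ℓ → ℕ) (hm : ∀ j, 0 < m j)
    (Λ : Fin ℓ → F) (hΛ : ∀ j, Λ j ≠ 0)
    (C : Submodule F (∀ j, Fin (m j) → F))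
    (hC : ∀ c ∈ C, twistShift m Λ c ∈ C) :
    ∀ a ∈ {a : ∀ j, Fin (m j) → F | ∀ c ∈ C, ∑ j, ∑ i, c j i * a j i ^ p ^ κ = 0},
      twistShift m (fun j => (Λ j)⁻¹ ^ p ^ (e - κ)) a
        ∈ {a : ∀ j, Fin (m j) → F | ∀ c ∈ C, ∑ j, ∑ i, c j i * a j i ^ p ^ κ = 0} := by
  classical
  have hpow : ∀ x : F, (x ^ p ^ (e - κ)) ^ p ^ κ = x := by
    intro x
    rw [← pow_mul, ← pow_add, Nat.sub_add_cancel hκ.le, ← hcard, FiniteField.pow_card]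
  intro a ha c hc
  -- find a preimage of `c` under the shift inside `C`
  obtain ⟨c', hc'C, hc'⟩ : ∃ c' ∈ C, twistShift m Λ c' = c := by
    have hinj : Function.Injective (fun x : C => (⟨twistShift m Λ x, hC x x.2⟩ : C)) := by
      intro x y hxy
      exact Subtype.ext (twistShift_injective m hm Λ hΛ (congrArg Subtype.val hxy))
    obtain ⟨x, hx⟩ := Finite.injective_iff_surjective.mp hinj ⟨c, hc⟩
    exact ⟨x, x.2, congrArg Subtype.val hx⟩
  subst hc'
  have key : ∀ j, ∑ i, twistShift m Λ c' j i *
      twistShift m (fun j => (Λ j)⁻¹ ^ p ^ (e - κ)) a j i ^ p ^ κ =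
      ∑ i, c' j i * a j i ^ p ^ κ := by
    intro j
    haveI : NeZero (m j) := ⟨(hm j).ne'⟩
    rw [sum_cycle]
    refine Finset.sum_congr rfl fun i _ => ?_
    rw [twistShift_add_one, twistShift_add_one]
    by_cases hcase : (i : ℕ) = m j - 1
    · rw [if_pos hcase, if_pos hcase, mul_pow, hpow]
      rw [show Λ j * c' j i * ((Λ j)⁻¹ * a j i ^ p ^ κ) =
        (Λ j * (Λ j)⁻¹) * (c' j i * a j i ^ p ^ κ) from by ring,
        mul_inv_cancel₀ (hΛ j), one_mul]
    · rw [if_neg hcase, if_neg hcase]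
  calc ∑ j, ∑ i, twistShift m Λ c' j i *
        twistShift m (fun j => (Λ j)⁻¹ ^ p ^ (e - κ)) a j i ^ p ^ κ
      = ∑ j, ∑ i, c' j i * a j i ^ p ^ κ := Finset.sum_congr rfl fun j _ => key j
    _ = 0 := ha c' hc'C
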